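/- arXiv:1706.07604 — 10 statements merged into one kernel-verified Lean document; each statement's English description precedes it below -/
import Mathlib

section
/- Let J = {1,…,n} be a finite set of jobs with processing times p_j > 0 and release times r_j ≥ 0, and let real numbers (C_j)_{j∈J} satisfy the parallel inequalities. Then for every nonempty U ⊆ J, p(U) ≤ 2·C_max(U) − 2·r_min(U), where C_max(U) = max_{j∈U} C_j. -/
/-- If `C` satisfies the parallel inequalities, then for every nonempty
`U ⊆ J` we have `p(U) ≤ 2 · C_max(U) − 2 · r_min(U)`. -/
theorem lp_total_processing_upper_bound
    {n : ℕ} (p r C : Fin n → ℝ)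
    (hp : ∀ j, 0 < p j) (hr : ∀ j, 0 ≤ r j)
    (hLP : ∀ (U : Finset (Fin n)) (hU : U.Nonempty),
      U.inf' hU r * ∑ j ∈ U, p j + (∑ j ∈ U, p j) ^ 2 / 2 ≤ ∑ j ∈ U, p j * C j) :
    ∀ (U : Finset (Fin n)) (hU : U.Nonempty),
      ∑ j ∈ U, p j ≤ 2 * U.sup' hU C - 2 * U.inf' hU r := by
  intro U hU
  have hP : 0 < ∑ j ∈ U, p j :=
    Finset.sum_pos (fun j _ => hp j) hU
  have h1 : ∑ j ∈ U, p j * C j ≤ (∑ j ∈ U, p j) * U.sup' hU C := by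
    rw [Finset.sum_mul]
    apply Finset.sum_le_sum
    intro j hj
    exact mul_le_mul_of_nonneg_left (Finset.le_sup' C hj) (hp j).le
  have h2 := (hLP U hU).trans h1
  nlinarith [h2, hP]
end

section
/- Suppose release dates are consistent with precedence constraints, i.e., r_j ≤ r_k whenever j ≺ k, and let σ be a feasible schedule with the list-scheduling property. Then σ has the following early-start property: for every time t at which the machine is available, if there is a job j with r_j ≤ t and S_j ≥ t, then some job h with h ≤ j has S_h = t. -/
/-- Lemma 1 of the paper: If release dates are consistent with precedence
constraints and `σ` is a feasible schedule with the list-scheduling property, then for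
every time `t` at which the machine is available, if some job `j` has `r j ≤ t` and has
not started yet (`S j ≥ t`), then some job `h ≤ j` starts exactly at time `t`.

A job `k` is available at `t` iff `r k ≤ t`, `t ≤ S k`, and every predecessor of `k` has
completed by `t`; the machine is available at `t` iff every job completes by `t` or starts
at or after `t`; the list-scheduling property says that whenever the machine is available
and jobs are available, the available job of smallest index starts at `t`. -/
theorem list_scheduling_early_start_property
    {n : ℕ} (p r : Fin n → ℝ) (prec : Fin n → Fin n → Prop)
    (hr : ∀ j, 0 ≤ r j)
    (hprec_lt : ∀ j k, prec j k → j < k)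
    (htrans : ∀ i j k, prec i j → prec j k → prec i k)
    (hrcons : ∀ j k, prec j k → r j ≤ r k)
    (S : Fin n → ℝ)
    (hrel : ∀ j, r j ≤ S j)
    (hdisj : ∀ j k, j ≠ k → S k + p k ≤ S j ∨ S j + p j ≤ S k)
    (hprecS : ∀ j k, prec j k → S j + p j ≤ S k)
    (hLS : ∀ t : ℝ, (∀ h, S h + p h ≤ t ∨ t ≤ S h) →
      ∀ j, (r j ≤ t ∧ t ≤ S j ∧ ∀ k, prec k j → S k + p k ≤ t) →
        (∀ k, (r k ≤ t ∧ t ≤ S k ∧ ∀ l, prec l k → S l + p l ≤ t) → j ≤ k) →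
        S j = t) :
    ∀ t : ℝ, (∀ h, S h + p h ≤ t ∨ t ≤ S h) →
      ∀ j, r j ≤ t → t ≤ S j → ∃ h, h ≤ j ∧ S h = t := by
  intro t hmach
  have main : ∀ N : ℕ, ∀ j : Fin n, j.val < N → r j ≤ t → t ≤ S j → ∃ h, h ≤ j ∧ S h = t := by
    intro N
    induction N with
    | zero => intro j hj; omega
    | succ N ih' =>
    intro j hjN hrj hSj
    have ih : ∀ l : Fin n, l < j → r l ≤ t → t ≤ S l → ∃ h, h ≤ l ∧ S h = t := by
      intro l hlj; exact ih' l (by omega)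
    by_cases hpre : ∀ l, prec l j → S l + p l ≤ t
    · classical
      set F : Finset (Fin n) :=
        Finset.univ.filter (fun k => r k ≤ t ∧ t ≤ S k ∧ ∀ l, prec l k → S l + p l ≤ t)
        with hF
      have hjF : j ∈ F := by
        simp [hF]; exact ⟨hrj, hSj, hpre⟩
      have hFne : F.Nonempty := ⟨j, hjF⟩
      set m := F.min' hFne with hm
      have hmF : m ∈ F := F.min'_mem hFne
      have hmavail : r m ≤ t ∧ t ≤ S m ∧ ∀ l, prec l m → S l + p l ≤ t := by
        simpa [hF] using hmF
      have hSm : S m = t := by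
        apply hLS t hmach m hmavail
        intro k hk
        exact F.min'_le k (by simp [hF]; exact hk)
      exact ⟨m, F.min'_le j hjF, hSm⟩
    · push_neg at hpre
      obtain ⟨l, hlj, hlnot⟩ := hpre
      have hSl : t ≤ S l := by
        rcases hmach l with h | h
        · exact absurd h (not_le.mpr hlnot)
        · exact h
      obtain ⟨h, hhl, hSh⟩ := ih l (hprec_lt l j hlj) (le_trans (hrcons l j hlj) hrj) hSl
      exact ⟨h, le_trans hhl (le_of_lt (hprec_lt l j hlj)), hSh⟩
  intro j; exact main (j.val + 1) j (Nat.lt_succ_self _)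
end

section
/- Let σ be a feasible schedule of a single-machine instance with p_j > 0 and r_j ≥ 0, and let (C_j)_{j∈J} satisfy the parallel inequalities. Let j ∈ U ⊆ J with C_h ≤ C_j for every h ∈ U, and let t ∈ ℝ be such that C^σ_j = t + p(U). Then C^σ_j ≤ t + 2·C_j − 2·r_min(U). -/
/-- inequality (3) of the key lemma: For a feasible schedule `σ` and LP values
`C` satisfying the parallel inequalities, if `j ∈ U`, `C h ≤ C j` for all `h ∈ U`, and
`C^σ_j = t + p(U)`, then `C^σ_j ≤ t + 2 C_j − 2 r_min(U)`. -/
theorem key_lemma_first_inequality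
    {n : ℕ} (p r C : Fin n → ℝ) (prec : Fin n → Fin n → Prop)
    (hp : ∀ j, 0 < p j) (hr : ∀ j, 0 ≤ r j)
    (hprec_lt : ∀ j k, prec j k → j < k)
    (htrans : ∀ i j k, prec i j → prec j k → prec i k)
    (S : Fin n → ℝ)
    (hrel : ∀ j, r j ≤ S j)
    (hdisj : ∀ j k, j ≠ k → S k + p k ≤ S j ∨ S j + p j ≤ S k)
    (hprecS : ∀ j k, prec j k → S j + p j ≤ S k)
    (hLP : ∀ (U : Finset (Fin n)) (hU : U.Nonempty),
      U.inf' hU r * ∑ j ∈ U, p j + (∑ j ∈ U, p j) ^ 2 / 2 ≤ ∑ j ∈ U, p j * C j)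
    (U : Finset (Fin n)) (j : Fin n) (hjU : j ∈ U)
    (hmax : ∀ h ∈ U, C h ≤ C j)
    (t : ℝ) (ht : S j + p j = t + ∑ k ∈ U, p k) :
    S j + p j ≤ t + 2 * C j - 2 * U.inf' ⟨j, hjU⟩ r := by
  have hU : U.Nonempty := ⟨j, hjU⟩
  have h1 := hLP U hU
  have h2 : ∑ k ∈ U, p k * C k ≤ (∑ k ∈ U, p k) * C j := by
    rw [Finset.sum_mul]
    exact Finset.sum_le_sum fun h hh =>
      mul_le_mul_of_nonneg_left (hmax h hh) (hp h).le
  have hP : 0 < ∑ k ∈ U, p k :=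
    Finset.sum_pos (fun k _ => hp k) hU
  nlinarith [h1, h2, hP, ht]
end

section
/- Let σ be a feasible schedule of a single-machine instance with p_j > 0 and r_j ≥ 0, and let (C_j)_{j∈J} satisfy the parallel inequalities. Let j ∈ U ⊆ J with C_h ≤ C_j for every h ∈ U, and let t ∈ ℝ be such that C^σ_j = t + p(U) and t ≤ r_min(U). Then C^σ_j ≤ 2·C_j. -/
/-- inequality (4) of the key lemma: For a feasible schedule `σ` and LP values
`C` satisfying the parallel inequalities, if `j ∈ U`, `C h ≤ C j` for all `h ∈ U`,
`C^σ_j = t + p(U)` and `t ≤ r_min(U)`, then `C^σ_j ≤ 2 C_j`. -/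
theorem key_lemma_second_inequality
    {n : ℕ} (p r C : Fin n → ℝ) (prec : Fin n → Fin n → Prop)
    (hp : ∀ j, 0 < p j) (hr : ∀ j, 0 ≤ r j)
    (hprec_lt : ∀ j k, prec j k → j < k)
    (htrans : ∀ i j k, prec i j → prec j k → prec i k)
    (S : Fin n → ℝ)
    (hrel : ∀ j, r j ≤ S j)
    (hdisj : ∀ j k, j ≠ k → S k + p k ≤ S j ∨ S j + p j ≤ S k)
    (hprecS : ∀ j k, prec j k → S j + p j ≤ S k)
    (hLP : ∀ (U : Finset (Fin n)) (hU : U.Nonempty),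
      U.inf' hU r * ∑ j ∈ U, p j + (∑ j ∈ U, p j) ^ 2 / 2 ≤ ∑ j ∈ U, p j * C j)
    (U : Finset (Fin n)) (j : Fin n) (hjU : j ∈ U)
    (hmax : ∀ h ∈ U, C h ≤ C j)
    (t : ℝ) (ht : S j + p j = t + ∑ k ∈ U, p k)
    (htr : t ≤ U.inf' ⟨j, hjU⟩ r) :
    S j + p j ≤ 2 * C j := by
  have hUne : U.Nonempty := ⟨j, hjU⟩
  have hLPU := hLP U hUne
  have hsum : ∑ k ∈ U, p k * C k ≤ (∑ k ∈ U, p k) * C j := by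
    rw [Finset.sum_mul]
    exact Finset.sum_le_sum fun h hh =>
      mul_le_mul_of_nonneg_left (hmax h hh) (hp h).le
  have hPpos : 0 < ∑ k ∈ U, p k :=
    Finset.sum_pos (fun k _ => hp k) hUne
  have hrmin : 0 ≤ U.inf' hUne r := by
    obtain ⟨k, _, hk⟩ := Finset.exists_mem_eq_inf' hUne r
    rw [hk]; exact hr k
  nlinarith [hLPU, hsum, hPpos, hrmin, htr, ht]
end

section
/- Suppose the instance satisfies p_j ≤ r_j for every job j, p_j > 0 for every j, and r_j ≤ r_k whenever j ≺ k. Let real numbers (C_j)_{j∈J} satisfy the parallel inequalities with C_1 ≤ C_2 ≤ … ≤ C_n, and let σ be a feasible schedule with the list-scheduling property (for the index order 1,…,n). Then Σ_{j∈J} w_j C^σ_j ≤ 2·Σ_{j∈J} w_j C_j. -/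
lemma cover_sum_aux {n : ℕ} (S p : Fin n → ℝ) (hp : ∀ k, 0 ≤ p k) :
    ∀ (V : Finset (Fin n)) (a b : ℝ),
      (∀ t, a ≤ t → t < b → ∃ k ∈ V, S k ≤ t ∧ t < S k + p k) →
      b - a ≤ ∑ k ∈ V, p k := by
  intro V
  induction V using Finset.strongInduction with
  | _ V ih =>
    intro a b hcov
    have hsum : (0:ℝ) ≤ ∑ k ∈ V, p k := Finset.sum_nonneg fun k _ => hp k
    rcases le_or_gt b a with hba | hab
    · linarith
    obtain ⟨k, hkV, hk1, hk2⟩ := hcov a le_rfl hab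
    rcases le_or_gt b (S k + p k) with hb | hb
    · have hple : p k ≤ ∑ x ∈ V, p x := Finset.single_le_sum (fun x _ => hp x) hkV
      linarith
    · have hrec := ih (V.erase k) (Finset.erase_ssubset hkV) (S k + p k) b ?_
      · have hadd : p k + ∑ x ∈ V.erase k, p x = ∑ x ∈ V, p x :=
          Finset.add_sum_erase V p hkV
        linarith
      · intro t ht1 ht2
        obtain ⟨k1, hk1V, h1, h2⟩ := hcov t (by linarith) ht2
        refine ⟨k1, Finset.mem_erase.mpr ⟨?_, hk1V⟩, h1, h2⟩
        rintro rfl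
        linarith

/-- Theorem 1 of the paper: If `p j ≤ r j` for every job, release dates are
consistent with precedence constraints, `C` satisfies the parallel inequalities and is
nondecreasing in the job index (jobs are listed in LP order, consistent with `≺`), and `σ`
is a feasible schedule with the list-scheduling property for this order, then the weighted
sum of completion times of `σ` is at most twice the LP objective. -/
theorem lp_list_scheduling_two_approx_small_jobs
    {n : ℕ} (p r w C : Fin n → ℝ) (prec : Fin n → Fin n → Prop)
    (hp : ∀ j, 0 < p j) (hr : ∀ j, 0 ≤ r j) (hw : ∀ j, 0 ≤ w j)
    (hpr : ∀ j, p j ≤ r j)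
    (hprec_lt : ∀ j k, prec j k → j < k)
    (htrans : ∀ i j k, prec i j → prec j k → prec i k)
    (hrcons : ∀ j k, prec j k → r j ≤ r k)
    (hCmono : ∀ j k : Fin n, j ≤ k → C j ≤ C k)
    (hLP : ∀ (U : Finset (Fin n)) (hU : U.Nonempty),
      U.inf' hU r * ∑ j ∈ U, p j + (∑ j ∈ U, p j) ^ 2 / 2 ≤ ∑ j ∈ U, p j * C j)
    (S : Fin n → ℝ)
    (hrel : ∀ j, r j ≤ S j)
    (hdisj : ∀ j k, j ≠ k → S k + p k ≤ S j ∨ S j + p j ≤ S k)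
    (hprecS : ∀ j k, prec j k → S j + p j ≤ S k)
    (hLS : ∀ t : ℝ, (∀ h, S h + p h ≤ t ∨ t ≤ S h) →
      ∀ j, (r j ≤ t ∧ t ≤ S j ∧ ∀ k, prec k j → S k + p k ≤ t) →
        (∀ k, (r k ≤ t ∧ t ≤ S k ∧ ∀ l, prec l k → S l + p l ≤ t) → j ≤ k) →
        S j = t) :
    ∑ j, w j * (S j + p j) ≤ 2 * ∑ j, w j * C j := by
  classical
  have hS0 : ∀ k, 0 < S k := fun k =>
    lt_of_lt_of_le (lt_of_lt_of_le (hp k) (hpr k)) (hrel k)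
  -- machine is available at every start time
  have hMA : ∀ k h, S h + p h ≤ S k ∨ S k ≤ S h := by
    intro k h
    rcases eq_or_ne h k with rfl | hne
    · exact Or.inr le_rfl
    · rcases hdisj h k hne with h1 | h2
      · right; linarith [hp k]
      · exact Or.inl h2
  -- if machine available and a job is available, the minimal available job starts now
  have hstart : ∀ t, (∀ h, S h + p h ≤ t ∨ t ≤ S h) →
      ∀ m, r m ≤ t → t ≤ S m → (∀ l, prec l m → S l + p l ≤ t) →
      ∃ k, k ≤ m ∧ S k = t := by
    intro t hmach m h1 h2 h3
    set A : Finset (Fin n) := Finset.univ.filter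
      (fun x => r x ≤ t ∧ t ≤ S x ∧ ∀ l, prec l x → S l + p l ≤ t) with hA
    have hmA : m ∈ A := by
      rw [hA, Finset.mem_filter]
      exact ⟨Finset.mem_univ _, h1, h2, h3⟩
    have hAne : A.Nonempty := ⟨m, hmA⟩
    set m0 := A.min' hAne with hm0
    have hm0A : m0 ∈ A := A.min'_mem hAne
    have hm0p : r m0 ≤ t ∧ t ≤ S m0 ∧ ∀ l, prec l m0 → S l + p l ≤ t := by
      simpa [hA] using hm0A
    have hse : S m0 = t := by
      apply hLS t hmach m0 hm0p
      intro k hk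
      refine A.min'_le k ?_
      rw [hA, Finset.mem_filter]
      exact ⟨Finset.mem_univ _, hk.1, hk.2.1, hk.2.2⟩
    exact ⟨m0, A.min'_le m hmA, hse⟩
  -- descent through unfinished predecessors: any pending job forces a start at t
  have hdesc : ∀ (N : ℕ) (t : ℝ), (∀ h, S h + p h ≤ t ∨ t ≤ S h) →
      ∀ m : Fin n, (m : ℕ) < N → r m ≤ t → t ≤ S m → ∃ k, k ≤ m ∧ S k = t := by
    intro N
    induction N with
    | zero => intro t _ m hm; omega
    | succ N ih =>
      intro t hmach m hmN h1 h2
      by_cases hav : ∀ l, prec l m → S l + p l ≤ t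
      · exact hstart t hmach m h1 h2 hav
      · push_neg at hav
        obtain ⟨l, hlm, hlt⟩ := hav
        have hl2 : t ≤ S l := (hmach l).resolve_left (not_le.mpr hlt)
        have hl1 : r l ≤ t := le_trans (hrcons l m hlm) h1
        have hlm' : l < m := hprec_lt l m hlm
        have hlN : (l : ℕ) < N := by
          have := Fin.lt_def.mp hlm'
          omega
        obtain ⟨k, hk1, hk2⟩ := ih t hmach l hlN hl1 hl2
        exact ⟨k, le_trans hk1 (le_of_lt hlm'), hk2⟩
  have key : ∀ j, S j + p j ≤ 2 * C j := by
    intro j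
    set Cov : ℝ → Prop := fun x => ∃ h, S h ≤ x ∧ x < S h + p h with hCovd
    have hncov_mach : ∀ t, ¬ Cov t → ∀ h, S h + p h ≤ t ∨ t ≤ S h := by
      intro t ht h
      by_contra hc
      push_neg at hc
      exact ht ⟨h, le_of_lt hc.2, hc.1⟩
    have hnopend : ∀ t, ¬ Cov t → ∀ m, r m ≤ t → t ≤ S m → False := by
      intro t htc m h1 h2
      obtain ⟨k, _, hk⟩ := hdesc n t (hncov_mach t htc) m m.isLt h1 h2
      exact htc ⟨k, le_of_eq hk, by rw [hk]; linarith [hp k]⟩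
    -- F0: candidate gap points; ts: last gap point before S j
    set F0 : Finset ℝ := insert 0
      ((Finset.univ.filter (fun k => S k + p k ≤ S j)).image (fun k => S k + p k)) with hF0
    have hF0le : ∀ x ∈ F0, x ≤ S j := by
      intro x hx
      rw [hF0, Finset.mem_insert] at hx
      rcases hx with rfl | hx
      · linarith [hS0 j]
      · obtain ⟨k, hk, rfl⟩ := Finset.mem_image.mp hx
        exact (Finset.mem_filter.mp hk).2
    set Free := F0.filter (fun x => ¬ Cov x) with hFree
    have h0Free : (0:ℝ) ∈ Free := by
      rw [hFree, Finset.mem_filter]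
      refine ⟨by rw [hF0]; exact Finset.mem_insert_self _ _, ?_⟩
      rintro ⟨h, hh1, hh2⟩
      have := hS0 h
      linarith
    have hFne : Free.Nonempty := ⟨0, h0Free⟩
    set ts := Free.max' hFne with hts
    have htsF : ts ∈ Free := Free.max'_mem hFne
    have hts0 : 0 ≤ ts := Free.le_max' 0 h0Free
    have htsnc : ¬ Cov ts := (Finset.mem_filter.mp htsF).2
    have htsSj : ts ≤ S j := hF0le ts (Finset.mem_filter.mp htsF).1
    have htsSj' : ts < S j := by
      rcases lt_or_eq_of_le htsSj with h | h
      · exact h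
      · exact absurd ⟨j, h.ge, by rw [h]; linarith [hp j]⟩ htsnc
    -- K: jobs starting after ts; k0: the first of them
    set K := Finset.univ.filter (fun k => ts < S k) with hK
    have hjK : j ∈ K := by simp [hK, htsSj']
    have hKne : K.Nonempty := ⟨j, hjK⟩
    obtain ⟨k0, hk0K, hk0⟩ := K.exists_min_image S hKne
    have hts_s0 : ts < S k0 := (Finset.mem_filter.mp hk0K).2
    -- nothing runs in (ts, S k0)
    have hgap : ∀ x, ts < x → x < S k0 → ¬ Cov x := by
      rintro x hx1 hx2 ⟨h, hh1, hh2⟩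
      rcases le_or_gt (S h) ts with hh | hh
      · exact htsnc ⟨h, hh, by linarith⟩
      · have hhK : h ∈ K := by simp [hK, hh]
        have := hk0 h hhK
        linarith
    -- all jobs of K are released no earlier than S k0
    have hrK : ∀ k ∈ K, S k0 ≤ r k := by
      intro k hkK
      by_contra hc
      push_neg at hc
      have hSk : ts < S k := (Finset.mem_filter.mp hkK).2
      rcases le_or_gt (r k) ts with h | h
      · exact hnopend ts htsnc k h (le_of_lt hSk)
      · exact hnopend (r k) (hgap _ h hc) k le_rfl (hrel k)
    -- every time in [S k0, S j] is covered by some execution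
    have hcov_win : ∀ t, S k0 ≤ t → t ≤ S j → Cov t := by
      intro t ht1 ht2
      by_contra htc
      set Et := F0.filter (fun x => x ≤ t) with hEt
      have h0Et : (0:ℝ) ∈ Et := by
        rw [hEt, Finset.mem_filter]
        refine ⟨by rw [hF0]; exact Finset.mem_insert_self _ _, by linarith⟩
      have hEtne : Et.Nonempty := ⟨0, h0Et⟩
      set u := Et.max' hEtne with hu
      have huEt : u ∈ Et := Et.max'_mem hEtne
      have huF0 : u ∈ F0 := (Finset.mem_filter.mp huEt).1
      have hut : u ≤ t := (Finset.mem_filter.mp huEt).2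
      have hunc : ¬ Cov u := by
        rintro ⟨h, hh1, hh2⟩
        rcases le_or_gt (S h + p h) t with hht | hht
        · have hmem : S h + p h ∈ Et := by
            rw [hEt, Finset.mem_filter]
            refine ⟨?_, hht⟩
            rw [hF0]
            apply Finset.mem_insert_of_mem
            exact Finset.mem_image.mpr
              ⟨h, Finset.mem_filter.mpr ⟨Finset.mem_univ _, by linarith⟩, rfl⟩
          have := Et.le_max' _ hmem
          linarith
        · exact htc ⟨h, le_trans hh1 hut, hht⟩
      have huts : u ≤ ts := Free.le_max' u (Finset.mem_filter.mpr ⟨huF0, hunc⟩)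
      rcases le_or_gt (S k0 + p k0) t with hc1 | hc1
      · have hmem : S k0 + p k0 ∈ Et := by
          rw [hEt, Finset.mem_filter]
          refine ⟨?_, hc1⟩
          rw [hF0]
          apply Finset.mem_insert_of_mem
          exact Finset.mem_image.mpr
            ⟨k0, Finset.mem_filter.mpr ⟨Finset.mem_univ _, by linarith⟩, rfl⟩
        have := Et.le_max' _ hmem
        linarith [hp k0]
      · exact htc ⟨k0, ht1, hc1⟩
    -- the common final step
    have final : ∀ (V : Finset (Fin n)) (hne : V.Nonempty) (T : ℝ),
        (∀ k ∈ V, k ≤ j) → S j + p j ≤ T + ∑ k ∈ V, p k →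
        T ≤ 2 * V.inf' hne r → S j + p j ≤ 2 * C j := by
      intro V hne T hVj hcovsum hT
      have hLP' := hLP V hne
      have hPC : ∑ k ∈ V, p k * C k ≤ (∑ k ∈ V, p k) * C j := by
        rw [Finset.sum_mul]
        apply Finset.sum_le_sum
        intro k hk
        exact mul_le_mul_of_nonneg_left (hCmono k j (hVj k hk)) (le_of_lt (hp k))
      have hPpos : 0 < ∑ k ∈ V, p k := Finset.sum_pos (fun k _ => hp k) hne
      have hρ0 : 0 ≤ V.inf' hne r := by
        obtain ⟨m, hm, hme⟩ := Finset.exists_mem_eq_inf' hne r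
        rw [hme]; exact hr m
      nlinarith [hLP', hPC, hPpos, sq_nonneg (∑ k ∈ V, p k)]
    -- V: jobs running in the busy window
    set V := K.filter (fun k => S k ≤ S j) with hV
    have hjV : j ∈ V := by
      rw [hV, Finset.mem_filter]
      exact ⟨hjK, le_rfl⟩
    by_cases hbad : ∀ k ∈ V, k ≤ j
    · -- no higher-index job in the window
      refine final V ⟨j, hjV⟩ (S k0) hbad ?_ ?_
      · have hcs := cover_sum_aux S p (fun k => le_of_lt (hp k)) V (S k0) (S j + p j) ?_
        · linarith
        · intro t ht1 ht2
          rcases le_or_gt t (S j) with h | h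
          · obtain ⟨h1, hh1, hh2⟩ := hcov_win t ht1 h
            refine ⟨h1, ?_, hh1, hh2⟩
            rw [hV, Finset.mem_filter, hK, Finset.mem_filter]
            refine ⟨⟨Finset.mem_univ _, ?_⟩, by linarith⟩
            by_contra hc
            push_neg at hc
            exact htsnc ⟨h1, hc, by linarith⟩
          · exact ⟨j, hjV, le_of_lt h, ht2⟩
      · have hinf : S k0 ≤ V.inf' ⟨j, hjV⟩ r := by
          apply Finset.le_inf'
          intro k hk
          exact hrK k (Finset.mem_filter.mp hk).1
        have h0 : 0 ≤ S k0 := by linarith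
        linarith
    · -- some higher-index job runs in the window
      push_neg at hbad
      obtain ⟨kb, hkbV, hkbj⟩ := hbad
      set Bad := V.filter (fun k => j < k) with hBad
      have hBadne : Bad.Nonempty := ⟨kb, by
        rw [hBad, Finset.mem_filter]
        exact ⟨hkbV, hkbj⟩⟩
      obtain ⟨k', hk'B, hk'max⟩ := Bad.exists_max_image S hBadne
      have hk'V : k' ∈ V := (Finset.mem_filter.mp hk'B).1
      have hjk' : j < k' := (Finset.mem_filter.mp hk'B).2
      have hk'K : k' ∈ K := (Finset.mem_filter.mp hk'V).1
      have hk'Sj : S k' ≤ S j := (Finset.mem_filter.mp hk'V).2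
      have hk0k' : S k0 ≤ S k' := hk0 k' hk'K
      have hTSj : S k' + p k' ≤ S j := by
        rcases hdisj j k' (ne_of_lt hjk') with h | h
        · exact h
        · linarith [hp j]
      set V' := V.filter (fun k => S k' + p k' ≤ S k) with hV'
      have hjV' : j ∈ V' := by
        rw [hV', Finset.mem_filter]
        exact ⟨hjV, hTSj⟩
      have hV'le : ∀ k ∈ V', k ≤ j := by
        intro k hk
        by_contra hc
        push_neg at hc
        have hkB : k ∈ Bad := by
          rw [hBad, Finset.mem_filter]
          exact ⟨(Finset.mem_filter.mp hk).1, hc⟩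
        have h1 := hk'max k hkB
        have h2 : S k' + p k' ≤ S k := (Finset.mem_filter.mp hk).2
        linarith [hp k']
      refine final V' ⟨j, hjV'⟩ (S k' + p k') hV'le ?_ ?_
      · have hcs := cover_sum_aux S p (fun k => le_of_lt (hp k)) V' (S k' + p k') (S j + p j) ?_
        · linarith
        · intro t ht1 ht2
          rcases le_or_gt t (S j) with h | h
          · obtain ⟨h1, hh1, hh2⟩ := hcov_win t (by linarith [hp k']) h
            refine ⟨h1, ?_, hh1, hh2⟩
            rw [hV', Finset.mem_filter, hV, Finset.mem_filter, hK, Finset.mem_filter]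
            have hh1ts : ts < S h1 := by
              by_contra hc
              push_neg at hc
              exact htsnc ⟨h1, hc, by linarith [hp k']⟩
            refine ⟨⟨⟨Finset.mem_univ _, hh1ts⟩, by linarith⟩, ?_⟩
            by_contra hc
            push_neg at hc
            rcases eq_or_ne h1 k' with rfl | hne
            · linarith
            · rcases hdisj h1 k' hne with hd | hd
              · linarith
              · linarith [hp k']
          · exact ⟨j, hjV', le_of_lt h, ht2⟩
      · have hklt : ∀ k ∈ V', S k' < r k := by
          intro k hk
          by_contra hc
          push_neg at hc
          have hkj : k ≤ j := hV'le k hk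
          have hTSk : S k' + p k' ≤ S k := (Finset.mem_filter.mp hk).2
          obtain ⟨x, hx1, hx2⟩ := hdesc n (S k') (hMA k') k k.isLt hc (by linarith [hp k'])
          have hxk : x = k' := by
            by_contra hne
            rcases hdisj x k' hne with hd | hd
            · rw [hx2] at hd; linarith [hp k']
            · rw [hx2] at hd; linarith [hp x]
          rw [hxk] at hx1
          exact absurd hx1 (not_le.mpr (lt_of_le_of_lt hkj hjk'))
        have hinf : S k' < V'.inf' ⟨j, hjV'⟩ r := by
          obtain ⟨m, hm, hme⟩ := Finset.exists_mem_eq_inf' ⟨j, hjV'⟩ r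
          rw [hme]; exact hklt m hm
        have hps : p k' ≤ S k' := le_trans (hpr k') (hrel k')
        linarith
  calc ∑ j, w j * (S j + p j) ≤ ∑ j, w j * (2 * C j) := by
        apply Finset.sum_le_sum
        intro i _
        exact mul_le_mul_of_nonneg_left (key i) (hw i)
    _ = 2 * ∑ j, w j * C j := by
        rw [Finset.mul_sum]
        apply Finset.sum_congr rfl
        intro i _
        ring
end

section
/- Let 0 < t and t' be reals with t' ≥ 3t. Let J' be a set of jobs with p_j > 0, r_j ≤ t' for all j ∈ J', and Σ_{j∈J'} p_j ≤ 2t'. Then every tight feasible schedule of J' subject to the additional constraint that no job starts before time 3t is contained in the interval [3t, 3t']: every job starts at or after 3t and completes at or before 3t'. -/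
/-- A feasible schedule of the instance `(p, r, prec)` subject to the additional
constraint that every job starts at or after time `L`. -/
def FeasibleFrom {n : ℕ} (p r : Fin n → ℝ) (prec : Fin n → Fin n → Prop) (L : ℝ)
    (S : Fin n → ℝ) : Prop :=
  (∀ j, L ≤ S j) ∧ (∀ j, r j ≤ S j) ∧
  (∀ j k, j ≠ k → S k + p k ≤ S j ∨ S j + p j ≤ S k) ∧
  (∀ j k, prec j k → S j + p j ≤ S k)

/-- Lemma 5 of the paper: If `0 < t`, `t' ≥ 3t`, all release times are at
most `t'` and the total processing time is at most `2t'`, then every tight feasible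
schedule in which no job starts before `3t` is contained in the interval `[3t, 3t']`. -/
theorem tight_schedule_in_interval
    {n : ℕ} (p r : Fin n → ℝ) (prec : Fin n → Fin n → Prop)
    (hp : ∀ j, 0 < p j) (hr : ∀ j, 0 ≤ r j)
    (hprec_lt : ∀ j k, prec j k → j < k)
    (htrans : ∀ i j k, prec i j → prec j k → prec i k)
    (t t' : ℝ) (ht : 0 < t) (htt' : 3 * t ≤ t')
    (hrle : ∀ j, r j ≤ t')
    (hsum : ∑ j, p j ≤ 2 * t')
    (S : Fin n → ℝ)
    (hfeas : FeasibleFrom p r prec (3 * t) S)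
    (htight : ∀ j s, 3 * t ≤ s → s < S j →
      ¬ FeasibleFrom p r prec (3 * t) (Function.update S j s)) :
    ∀ j, 3 * t ≤ S j ∧ S j + p j ≤ 3 * t' := by
  obtain ⟨hL, hR, hD, hP⟩ := hfeas
  -- Step 1: tightness trichotomy
  have key : ∀ j : Fin n, S j ≤ 3 * t ∨ S j ≤ r j ∨ ∃ k, k ≠ j ∧ S k + p k = S j := by
    intro j
    by_contra hcon
    push_neg at hcon
    obtain ⟨h3, hrj, hC⟩ := hcon
    set F : Finset (Fin n) := Finset.univ.filter (fun k => k ≠ j ∧ S k + p k ≤ S j) with hF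
    set s : ℝ := F.fold max (max (3 * t) (r j)) (fun k => S k + p k) with hs
    have hinit : max (3 * t) (r j) ≤ s := (Finset.le_fold_max _).2 (Or.inl le_rfl)
    have hmem : ∀ k ∈ F, S k + p k ≤ s := fun k hk =>
      (Finset.le_fold_max _).2 (Or.inr ⟨k, hk, le_rfl⟩)
    have h3s : 3 * t ≤ s := le_trans (le_max_left _ _) hinit
    have hrs : r j ≤ s := le_trans (le_max_right _ _) hinit
    have hslt : s < S j := by
      rw [hs]
      apply (Finset.fold_max_lt _).2
      constructor
      · exact max_lt h3 hrj
      · intro k hk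
        rw [hF] at hk
        simp only [Finset.mem_filter] at hk
        exact lt_of_le_of_ne hk.2.2 (hC k hk.2.1)
    refine htight j s h3s hslt ⟨?_, ?_, ?_, ?_⟩
    · intro i
      rcases eq_or_ne i j with rfl | hij
      · rw [Function.update_self]; exact h3s
      · rw [Function.update_of_ne hij]; exact hL i
    · intro i
      rcases eq_or_ne i j with rfl | hij
      · rw [Function.update_self]; exact hrs
      · rw [Function.update_of_ne hij]; exact hR i
    · intro i k hik
      rcases eq_or_ne i j with rfl | hij
      · rw [Function.update_self, Function.update_of_ne (Ne.symm hik)]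
        rcases hD i k hik with h | h
        · left
          apply hmem
          rw [hF]; simp only [Finset.mem_filter, Finset.mem_univ, true_and]
          exact ⟨Ne.symm hik, h⟩
        · right; linarith
      · rcases eq_or_ne k j with rfl | hkj
        · rw [Function.update_self, Function.update_of_ne hij]
          rcases hD i k hik with h | h
          · left; linarith
          · right
            apply hmem
            rw [hF]; simp only [Finset.mem_filter, Finset.mem_univ, true_and]
            exact ⟨hik, h⟩
        · rw [Function.update_of_ne hij, Function.update_of_ne hkj]
          exact hD i k hik
    · intro i k hik
      have hikne : i ≠ k := fun h => absurd (hprec_lt i k hik) (by simp [h])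
      rcases eq_or_ne i j with rfl | hij
      · rw [Function.update_self, Function.update_of_ne (Ne.symm hikne)]
        have := hP i k hik
        linarith
      · rcases eq_or_ne k j with rfl | hkj
        · rw [Function.update_self, Function.update_of_ne hij]
          apply hmem
          rw [hF]; simp only [Finset.mem_filter, Finset.mem_univ, true_and]
          exact ⟨hij, hP i k hik⟩
        · rw [Function.update_of_ne hij, Function.update_of_ne hkj]
          exact hP i k hik
  -- Step 2: inductive bound
  have main : ∀ N : ℕ, ∀ j : Fin n,
      (Finset.univ.filter (fun k => S k < S j)).card < N →
      S j ≤ t' + ∑ k ∈ Finset.univ.filter (fun k => k ≠ j ∧ S k + p k ≤ S j), p k := by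
    intro N
    induction N with
    | zero => intro j hj; omega
    | succ N ih =>
      intro j hj
      have hsum_nonneg : (0:ℝ) ≤ ∑ k ∈ Finset.univ.filter
          (fun k => k ≠ j ∧ S k + p k ≤ S j), p k :=
        Finset.sum_nonneg fun k _ => (hp k).le
      rcases key j with h | h | ⟨k, hkj, hck⟩
      · linarith
      · have := hrle j; linarith
      · have hks : S k < S j := by have := hp k; linarith
        have hcard : (Finset.univ.filter (fun l => S l < S k)).card < N := by
          have hsub : Finset.univ.filter (fun l => S l < S k) ⊂
              Finset.univ.filter (fun l => S l < S j) := by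
            constructor
            · intro l hl
              simp only [Finset.mem_filter, Finset.mem_univ, true_and] at hl ⊢
              linarith
            · intro hcontra
              have := hcontra (by simp [hks] : k ∈ Finset.univ.filter (fun l => S l < S j))
              simp at this
            -- k ∈ bigger not smaller
          have := Finset.card_lt_card hsub
          omega
        have hIH := ih k hcard
        have hsub : insert k (Finset.univ.filter (fun l => l ≠ k ∧ S l + p l ≤ S k)) ⊆
            Finset.univ.filter (fun l => l ≠ j ∧ S l + p l ≤ S j) := by
          intro l hl
          simp only [Finset.mem_insert, Finset.mem_filter, Finset.mem_univ, true_and] at hl ⊢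
          rcases hl with rfl | ⟨hlk, hlc⟩
          · exact ⟨hkj, hck.le⟩
          · constructor
            · rintro rfl
              have := hp l
              linarith
            · linarith
        have hsum_le : ∑ l ∈ insert k (Finset.univ.filter (fun l => l ≠ k ∧ S l + p l ≤ S k)), p l
            ≤ ∑ l ∈ Finset.univ.filter (fun l => l ≠ j ∧ S l + p l ≤ S j), p l :=
          Finset.sum_le_sum_of_subset_of_nonneg hsub (fun l _ _ => (hp l).le)
        rw [Finset.sum_insert (by simp)] at hsum_le
        linarith
  intro j
  refine ⟨hL j, ?_⟩
  have hmain := main ((Finset.univ.filter (fun k => S k < S j)).card + 1) j (Nat.lt_succ_self _)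
  have hsub : insert j (Finset.univ.filter (fun k => k ≠ j ∧ S k + p k ≤ S j)) ⊆ Finset.univ :=
    Finset.subset_univ _
  have h2 : p j + ∑ k ∈ Finset.univ.filter (fun k => k ≠ j ∧ S k + p k ≤ S j), p k ≤ ∑ k, p k := by
    rw [← Finset.sum_insert (by simp)]
    exact Finset.sum_le_sum_of_subset_of_nonneg hsub (fun l _ _ => (hp l).le)
  linarith
end

section
/- Fix reals a > 0 and c > 0. For b ∈ [0, a] let T(b) = e^{a·⌊(ln c − b)/a⌋ + b}, i.e., T(b) is the largest number of the form e^{ak + b} with k ∈ ℤ that is at most c. If b is uniformly distributed on [0, a], then E[T(b)] = c·(1 − e^{−a})/a, and in particular E[T(b)] < c/a. -/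
open MeasureTheory

/-- For `a > 0`, `c > 0` and `b` uniformly distributed on `[0, a]`, the
expectation of `T(b) = e^{a⌊(ln c − b)/a⌋ + b}` (the largest number of the form
`e^{ak + b}`, `k ∈ ℤ`, that is at most `c`) equals `c (1 − e^{−a}) / a`; in particular
it is less than `c / a`. -/
theorem expected_rounded_point
    (a c : ℝ) (ha : 0 < a) (hc : 0 < c) :
    (⨍ b in Set.Icc (0 : ℝ) a,
        Real.exp (a * (⌊(Real.log c - b) / a⌋ : ℝ) + b))
      = c * (1 - Real.exp (-a)) / a ∧
    (⨍ b in Set.Icc (0 : ℝ) a,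
        Real.exp (a * (⌊(Real.log c - b) / a⌋ : ℝ) + b)) < c / a := by
  set L := Real.log c with hL
  set m := ⌊L / a⌋ with hm
  set r := L - a * m with hrdef
  have h1 : (m : ℝ) * a ≤ L := by
    have := Int.floor_le (L / a)
    rw [← le_div_iff₀ ha]; exact this
  have h2 : L < ((m : ℝ) + 1) * a := by
    have := Int.lt_floor_add_one (L / a)
    rw [← div_lt_iff₀ ha]; push_cast; exact this
  have hr0 : 0 ≤ r := by simp only [hrdef]; nlinarith
  have hra : r < a := by simp only [hrdef]; nlinarith
  -- floor values
  have hfloor1 : ∀ b ∈ Set.Ioc (0:ℝ) r, ⌊(L - b) / a⌋ = m := by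
    intro b hb
    rw [Int.floor_eq_iff]
    constructor
    · rw [le_div_iff₀ ha]; nlinarith [hb.2]
    · rw [div_lt_iff₀ ha]; push_cast; nlinarith [hb.1]
  have hfloor2 : ∀ b ∈ Set.Ioc r a, ⌊(L - b) / a⌋ = m - 1 := by
    intro b hb
    rw [Int.floor_eq_iff]
    constructor
    · push_cast; rw [le_div_iff₀ ha]; nlinarith [hb.2]
    · push_cast; rw [div_lt_iff₀ ha]; nlinarith [hb.1]
  set g1 : ℝ → ℝ := fun b => Real.exp (a * m) * Real.exp b with hg1
  set g2 : ℝ → ℝ := fun b => Real.exp (a * (m - 1)) * Real.exp b with hg2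
  set f : ℝ → ℝ := fun b => Real.exp (a * (⌊(L - b) / a⌋ : ℝ) + b) with hf
  have heq1 : Set.EqOn f g1 (Set.Ioc 0 r) := by
    intro b hb
    simp only [hf, hg1, ← Real.exp_add]
    rw [hfloor1 b hb]
  have heq2 : Set.EqOn f g2 (Set.Ioc r a) := by
    intro b hb
    simp only [hf, hg2, ← Real.exp_add]
    rw [hfloor2 b hb]; push_cast; ring_nf
  have hint1 : IntegrableOn f (Set.Ioc 0 r) := by
    rw [integrableOn_congr_fun heq1 measurableSet_Ioc]
    exact ((continuous_const.mul Real.continuous_exp).integrableOn_Ioc)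
  have hint2 : IntegrableOn f (Set.Ioc r a) := by
    rw [integrableOn_congr_fun heq2 measurableSet_Ioc]
    exact ((continuous_const.mul Real.continuous_exp).integrableOn_Ioc)
  have hcval : Real.exp (a * m + r) = c := by
    have : a * (m:ℝ) + r = L := by simp only [hrdef]; ring
    rw [this, hL, Real.exp_log hc]
  have hkey : (∫ b in Set.Icc (0:ℝ) a, f b) = c * (1 - Real.exp (-a)) := by
    rw [MeasureTheory.integral_Icc_eq_integral_Ioc]
    rw [← Set.Ioc_union_Ioc_eq_Ioc hr0 hra.le]
    rw [MeasureTheory.setIntegral_union (Set.Ioc_disjoint_Ioc_of_le le_rfl) measurableSet_Ioc hint1 hint2]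
    rw [MeasureTheory.setIntegral_congr_fun measurableSet_Ioc heq1,
        MeasureTheory.setIntegral_congr_fun measurableSet_Ioc heq2]
    rw [← intervalIntegral.integral_of_le hr0, ← intervalIntegral.integral_of_le hra.le]
    simp only [hg1, hg2]
    rw [intervalIntegral.integral_const_mul, intervalIntegral.integral_const_mul,
        integral_exp, integral_exp]
    have e1 : Real.exp (a * ((m:ℝ) - 1)) = Real.exp (a * m) * Real.exp (-a) := by
      rw [← Real.exp_add]; ring_nf
    have e2 : Real.exp (-a) * Real.exp a = 1 := by
      rw [← Real.exp_add]; simp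
    rw [e1, ← hcval, Real.exp_add, Real.exp_zero]
    linear_combination Real.exp (a * (m:ℝ)) * e2
  have havg : (⨍ b in Set.Icc (0:ℝ) a, f b) = c * (1 - Real.exp (-a)) / a := by
    rw [MeasureTheory.setAverage_eq, hkey, Real.volume_real_Icc_of_le ha.le]
    simp only [smul_eq_mul, sub_zero, ENNReal.toReal_ofReal ha.le]
    field_simp
  refine ⟨havg, ?_⟩
  rw [havg]
  have : (1 : ℝ) - Real.exp (-a) < 1 := by
    have := Real.exp_pos (-a); linarith
  rw [div_lt_div_iff₀ ha ha]
  nlinarith [mul_pos (mul_pos hc (Real.exp_pos (-a))) ha]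
end

section
/- Let σ* be a feasible schedule of a single-machine instance with p_j > 0 and r_j ≥ 0, with jobs indexed so that C^{σ*}_1 ≤ C^{σ*}_2 ≤ … ≤ C^{σ*}_n and j < k whenever j ≺ k, and let ε > 0. Then there exists a feasible schedule σ' of the same instance in which each start time S'_j is an integer multiple of ε·p_j and C^{σ'}_j ≤ C^{σ*}_j + ε·Σ_{k≤j} p_k ≤ (1+ε)·C^{σ*}_j for every job j. -/
/-- Section 4.1 of the paper: Given a feasible schedule `σ*` with jobs
indexed in order of completion times and consistently with the precedence order, and
`ε > 0`, there is a feasible schedule `σ'` in which every start time is an integer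
multiple of `ε · p j` and `C^{σ'}_j ≤ C^{σ*}_j + ε Σ_{k ≤ j} p k ≤ (1+ε) C^{σ*}_j`. -/
theorem rounded_start_times_schedule
    {n : ℕ} (p r : Fin n → ℝ) (prec : Fin n → Fin n → Prop)
    (hp : ∀ j, 0 < p j) (hr : ∀ j, 0 ≤ r j)
    (hprec_lt : ∀ j k, prec j k → j < k)
    (htrans : ∀ i j k, prec i j → prec j k → prec i k)
    (S : Fin n → ℝ)
    (hrel : ∀ j, r j ≤ S j)
    (hdisj : ∀ j k, j ≠ k → S k + p k ≤ S j ∨ S j + p j ≤ S k)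
    (hprecS : ∀ j k, prec j k → S j + p j ≤ S k)
    (hsorted : ∀ j k : Fin n, j ≤ k → S j + p j ≤ S k + p k)
    (ε : ℝ) (hε : 0 < ε) :
    ∃ S' : Fin n → ℝ,
      (∀ j, r j ≤ S' j) ∧
      (∀ j k, j ≠ k → S' k + p k ≤ S' j ∨ S' j + p j ≤ S' k) ∧
      (∀ j k, prec j k → S' j + p j ≤ S' k) ∧
      (∀ j, ∃ m : ℤ, S' j = m * (ε * p j)) ∧
      (∀ j, S' j + p j ≤ S j + p j + ε * ∑ k ∈ Finset.Iic j, p k ∧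
        S j + p j + ε * ∑ k ∈ Finset.Iic j, p k ≤ (1 + ε) * (S j + p j)) := by
  -- key gap lemma: earlier jobs finish before later ones start
  have hgap : ∀ j k : Fin n, j < k → S j + p j ≤ S k := by
    intro j k hjk
    rcases hdisj j k (ne_of_lt hjk) with h | h
    · have h2 := hsorted j k (le_of_lt hjk)
      have := hp j
      linarith
    · exact h
  -- sum of processing times of earlier jobs fits before S j
  have hsumIio : ∀ m : ℕ, ∀ j : Fin n, j.val = m → ∑ k ∈ Finset.Iio j, p k ≤ S j := by
    intro m
    induction m with
    | zero =>
      intro j hj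
      have : Finset.Iio j = ∅ := by
        ext k
        simp [Fin.lt_def, hj]
      rw [this]
      simpa using (hr j).trans (hrel j)
    | succ m ih =>
      intro j hj
      have hmn : m < n := by omega
      set i : Fin n := ⟨m, hmn⟩ with hi
      have hij : i < j := by simp [Fin.lt_def, hj, hi]
      have hIio : Finset.Iio j = Finset.Iic i := by
        ext k
        simp only [Finset.mem_Iio, Finset.mem_Iic, Fin.lt_def, Fin.le_def, hj, hi]
        omega
      have hins : Finset.Iic i = insert i (Finset.Iio i) := by
        ext k
        simp only [Finset.mem_Iic, Finset.mem_insert, Finset.mem_Iio]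
        constructor
        · intro h; rcases eq_or_lt_of_le h with h | h
          · exact Or.inl h
          · exact Or.inr h
        · rintro (rfl | h)
          · exact le_refl _
          · exact le_of_lt h
      have hnotmem : i ∉ Finset.Iio i := by simp
      have hsum := ih i rfl
      have hgapij := hgap i j hij
      rw [hIio, hins, Finset.sum_insert hnotmem]
      linarith
  have hsumIic : ∀ j : Fin n, ∑ k ∈ Finset.Iic j, p k ≤ S j + p j := by
    intro j
    have hins : Finset.Iic j = insert j (Finset.Iio j) := by
      ext k
      simp only [Finset.mem_Iic, Finset.mem_insert, Finset.mem_Iio]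
      constructor
      · intro h; rcases eq_or_lt_of_le h with h | h
        · exact Or.inl h
        · exact Or.inr h
      · rintro (rfl | h)
        · exact le_refl _
        · exact le_of_lt h
    have hnotmem : j ∉ Finset.Iio j := by simp
    rw [hins, Finset.sum_insert hnotmem]
    have := hsumIio j.val j rfl
    linarith
  have hIicIio : ∀ j : Fin n, ∑ k ∈ Finset.Iic j, p k = (∑ k ∈ Finset.Iio j, p k) + p j := by
    intro j
    have hins : Finset.Iic j = insert j (Finset.Iio j) := by
      ext k
      simp only [Finset.mem_Iic, Finset.mem_insert, Finset.mem_Iio]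
      constructor
      · intro h; rcases eq_or_lt_of_le h with h | h
        · exact Or.inl h
        · exact Or.inr h
      · rintro (rfl | h)
        · exact le_refl _
        · exact le_of_lt h
    rw [hins, Finset.sum_insert (by simp)]
    ring
  -- the rounded schedule
  set T : Fin n → ℝ := fun j => S j + ε * ∑ k ∈ Finset.Iio j, p k with hT
  set S' : Fin n → ℝ := fun j => ⌈T j / (ε * p j)⌉ * (ε * p j) with hS'
  have hu : ∀ j : Fin n, 0 < ε * p j := fun j => mul_pos hε (hp j)
  have hsumnn : ∀ j : Fin n, 0 ≤ ∑ k ∈ Finset.Iio j, p k :=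
    fun j => Finset.sum_nonneg fun k _ => (hp k).le
  have hTle : ∀ j : Fin n, T j ≤ S' j := by
    intro j
    have h1 : T j / (ε * p j) ≤ (⌈T j / (ε * p j)⌉ : ℝ) := Int.le_ceil _
    have := (div_le_iff₀ (hu j)).mp h1
    simpa [hS'] using this
  have hleT : ∀ j : Fin n, S' j ≤ T j + ε * p j := by
    intro j
    have h1 : (⌈T j / (ε * p j)⌉ : ℝ) < T j / (ε * p j) + 1 := Int.ceil_lt_add_one _
    have h2 : (⌈T j / (ε * p j)⌉ : ℝ) * (ε * p j) < (T j / (ε * p j) + 1) * (ε * p j) :=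
      mul_lt_mul_of_pos_right h1 (hu j)
    have h3 : (T j / (ε * p j) + 1) * (ε * p j) = T j + ε * p j := by
      rw [add_mul, div_mul_cancel₀ _ (hu j).ne', one_mul]
    rw [h3] at h2
    exact h2.le
  have hST : ∀ j : Fin n, S j ≤ T j := by
    intro j
    have := hsumnn j
    have h : 0 ≤ ε * ∑ k ∈ Finset.Iio j, p k := mul_nonneg hε.le this
    simp only [hT]; linarith
  -- rounded gap lemma
  have hgap' : ∀ j k : Fin n, j < k → S' j + p j ≤ S' k := by
    intro j k hjk
    have h1 : S' j + p j ≤ T j + ε * p j + p j := by linarith [hleT j]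
    have h2 : Finset.Iic j ⊆ Finset.Iio k := by
      intro x hx
      simp only [Finset.mem_Iic] at hx
      simp only [Finset.mem_Iio]
      exact lt_of_le_of_lt hx hjk
    have h3 : ∑ x ∈ Finset.Iic j, p x ≤ ∑ x ∈ Finset.Iio k, p x :=
      Finset.sum_le_sum_of_subset_of_nonneg h2 (fun x _ _ => (hp x).le)
    have h4 := hgap j k hjk
    have h5 := hIicIio j
    have h6 : T j + ε * p j + p j ≤ T k := by
      simp only [hT]
      nlinarith [mul_le_mul_of_nonneg_left h3 hε.le]
    linarith [hTle k]
  refine ⟨S', ?_, ?_, ?_, ?_, ?_⟩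
  · intro j
    exact (hrel j).trans ((hST j).trans (hTle j))
  · intro j k hjk
    rcases lt_or_gt_of_ne hjk with h | h
    · exact Or.inr (hgap' j k h)
    · exact Or.inl (hgap' k j h)
  · intro j k hjk
    exact hgap' j k (hprec_lt j k hjk)
  · intro j
    exact ⟨⌈T j / (ε * p j)⌉, rfl⟩
  · intro j
    constructor
    · have h1 := hleT j
      have h2 := hIicIio j
      simp only [hT] at h1
      nlinarith
    · have h := hsumIic j
      nlinarith
end

section
/- Let 0 < L ≤ M and let σ be a feasible schedule of a single-machine instance with p_j > 0 in which every job j satisfies S_j ≥ L and C^σ_j ≤ M. Call a job j early if S_j < p_j. Then the number of early jobs is at most log₂(M/L). -/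
/-- Lemma 7 of the paper: In a feasible schedule in which every job starts
at or after `L > 0` and completes by `M ≥ L`, the number of early jobs (jobs `j` with
`S j < p j`) is at most `log₂(M / L)`. -/
theorem number_of_early_jobs_bound
    {n : ℕ} (p r : Fin n → ℝ) (prec : Fin n → Fin n → Prop)
    (hp : ∀ j, 0 < p j) (hr : ∀ j, 0 ≤ r j)
    (hprec_lt : ∀ j k, prec j k → j < k)
    (htrans : ∀ i j k, prec i j → prec j k → prec i k)
    (L M : ℝ) (hL : 0 < L) (hLM : L ≤ M)
    (S : Fin n → ℝ)
    (hrel : ∀ j, r j ≤ S j)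
    (hdisj : ∀ j k, j ≠ k → S k + p k ≤ S j ∨ S j + p j ≤ S k)
    (hprecS : ∀ j k, prec j k → S j + p j ≤ S k)
    (hwindow : ∀ j, L ≤ S j ∧ S j + p j ≤ M) :
    (({j : Fin n | S j < p j}.ncard : ℝ) ≤ Real.logb 2 (M / L)) := by
  have key : ∀ m (F : Finset (Fin n)), F.card = m → (∀ j ∈ F, S j < p j) →
      ∀ L' : ℝ, 0 < L' → L' ≤ M → (∀ j ∈ F, L' ≤ S j) → (2 : ℝ) ^ m * L' ≤ M := by
    intro m
    induction m with
    | zero => intro F _ _ L' _ hL'M _; simpa using hL'M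
    | succ m ih =>
      intro F hcard hearly L' hL'pos hL'M hL'S
      have hne : F.Nonempty := Finset.card_pos.mp (by omega)
      obtain ⟨j, hjF, hjmin⟩ := F.exists_min_image S hne
      have hSjL : L' ≤ S j := hL'S j hjF
      have hSjp : S j < p j := hearly j hjF
      have h2Sj : 2 * S j < M := by
        have := (hwindow j).2; linarith
      have hstep : ∀ k ∈ F.erase j, 2 * L' ≤ S k := by
        intro k hk
        obtain ⟨hkj, hkF⟩ := Finset.mem_erase.mp hk
        rcases hdisj j k hkj.symm with h | h
        · have := hjmin k hkF
          have := hp k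
          linarith
        · have := hjmin k hkF
          linarith
      have hcard' : (F.erase j).card = m := by
        rw [Finset.card_erase_of_mem hjF, hcard]; omega
      have := ih (F.erase j) hcard'
        (fun k hk => hearly k (Finset.mem_of_mem_erase hk))
        (2 * L') (by linarith) (by linarith) hstep
      calc (2 : ℝ) ^ (m + 1) * L' = (2 : ℝ) ^ m * (2 * L') := by ring
        _ ≤ M := this
  have hfin : {j : Fin n | S j < p j}.Finite := Set.toFinite _
  set k := {j : Fin n | S j < p j}.ncard with hk
  have hkcard : k = hfin.toFinset.card := Set.ncard_eq_toFinset_card _ hfin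
  have hbound : (2 : ℝ) ^ k * L ≤ M := by
    rw [hkcard]
    exact key _ hfin.toFinset rfl
      (fun j hj => (hfin.mem_toFinset.mp hj))
      L hL hLM (fun j _ => (hwindow j).1)
  have hML : (2 : ℝ) ^ k ≤ M / L := (le_div_iff₀ hL).mpr hbound
  have hMLpos : 0 < M / L := div_pos (lt_of_lt_of_le hL hLM) hL
  rw [Real.le_logb_iff_rpow_le one_lt_two hMLpos]
  calc (2 : ℝ) ^ (k : ℝ) = (2 : ℝ) ^ k := Real.rpow_natCast 2 k
    _ ≤ M / L := hML
end

section
/- Let an instance have jobs J = {1,…,n} with p_j > 0 and release times r'_j ≥ 0 satisfying r'_j ≤ r'_k whenever j ≺ k. Suppose there exist a set A ⊆ J and numbers S'_k ≥ 0 for k ∈ A such that: (b) r'_k ≥ S'_k for every k ∈ A; (c) r'_j ≥ p_j for every j ∉ A; and (e) for every j ∈ J and every k ∈ A, r'_j ∉ (S'_k, S'_k + p_k). Let real numbers (C_j)_{j∈J} satisfy the parallel inequalities (with respect to the release times r') with C_1 ≤ C_2 ≤ … ≤ C_n, and let σ be a feasible schedule (with respect to r') having the list-scheduling property for the index order 1,…,n.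 Then C^σ_j ≤ 2·C_j for every job j, and hence Σ_j w_j C^σ_j ≤ 2·Σ_j w_j C_j. -/
open Finset

lemma block_aux {n : ℕ} (p S : Fin n → ℝ) (hp : ∀ j, 0 < p j) (hS : ∀ j, 0 ≤ S j)
    (hdisj : ∀ j k : Fin n, j ≠ k → S k + p k ≤ S j ∨ S j + p j ≤ S k) :
    ∀ N : ℕ, ∀ j : Fin n, (univ.filter fun k => S k < S j).card < N →
    ∃ t0 : ℝ, ∃ U : Finset (Fin n),
      0 ≤ t0 ∧ j ∈ U ∧
      (∀ m ∈ U, t0 ≤ S m ∧ S m ≤ S j) ∧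
      (∀ m ∈ U, S m = t0 + ∑ l ∈ U.filter (fun l => S l < S m), p l) ∧
      (∀ t : ℝ, t0 ≤ t → t ≤ S j → ∃ m ∈ U, S m ≤ t ∧ t < S m + p m) ∧
      (∀ k, t0 ≤ S k ∨ S k + p k < t0) := by
  classical
  have hSinj : ∀ a b : Fin n, S a = S b → a = b := by
    intro a b hab
    by_contra hne
    rcases hdisj a b hne with h | h
    · linarith [hp a, hp b]
    · linarith [hp a, hp b]
  intro N
  induction N with
  | zero => intro j h; omega
  | succ N IH =>
    intro j hcard
    by_cases hex : ∃ k, k ≠ j ∧ S k + p k = S j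
    · obtain ⟨k, hkj, hkend⟩ := hex
      have hSk : S k < S j := by have := hp k; linarith
      have hsub : (univ.filter fun l => S l < S k) ⊆ (univ.filter fun l => S l < S j) := by
        intro l hl
        simp only [mem_filter, mem_univ, true_and] at hl ⊢
        linarith
      have hss : (univ.filter fun l => S l < S k) ⊂ (univ.filter fun l => S l < S j) := by
        refine (Finset.ssubset_iff_of_subset hsub).mpr ⟨k, ?_, ?_⟩
        · simp [hSk]
        · simp
      have hc2 : (univ.filter fun l => S l < S k).card < N := by
        have := Finset.card_lt_card hss; omega
      obtain ⟨t0, U, ht0, hkU, hbd, hch, hcov, hgap⟩ := IH k hc2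
      have hjU : j ∉ U := by
        intro h; have := (hbd j h).2; linarith
      refine ⟨t0, insert j U, ht0, mem_insert_self _ _, ?_, ?_, ?_, hgap⟩
      · intro m hm
        rcases mem_insert.mp hm with rfl | hm
        · exact ⟨by have := (hbd k hkU).1; linarith, le_refl _⟩
        · exact ⟨(hbd m hm).1, by have := (hbd m hm).2; linarith⟩
      · intro m hm
        rcases mem_insert.mp hm with rfl | hm
        · have hf : (insert m U).filter (fun l => S l < S m) = U := by
            rw [filter_insert, if_neg (lt_irrefl _)]
            exact filter_true_of_mem (fun l hl => by have := (hbd l hl).2; linarith)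
          rw [hf]
          have h1 := hch k hkU
          have h2 : U.filter (fun l => S l < S k) = U.erase k := by
            ext l
            simp only [mem_filter, mem_erase]
            constructor
            · rintro ⟨hl, hlt⟩
              exact ⟨fun h => by subst h; exact lt_irrefl _ hlt, hl⟩
            · rintro ⟨hne, hl⟩
              exact ⟨hl, lt_of_le_of_ne ((hbd l hl).2) (fun h => hne (hSinj _ _ h))⟩
          rw [h2] at h1
          have h3 : ∑ l ∈ U.erase k, p l + p k = ∑ l ∈ U, p l := Finset.sum_erase_add U p hkU
          linarith
        · have hf : (insert j U).filter (fun l => S l < S m) = U.filter (fun l => S l < S m) := by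
            rw [filter_insert, if_neg]
            have := (hbd m hm).2
            push_neg
            linarith
          rw [hf]
          exact hch m hm
      · intro t ht0t htj
        by_cases htk : t ≤ S k
        · obtain ⟨m, hm, h1, h2⟩ := hcov t ht0t htk
          exact ⟨m, mem_insert_of_mem hm, h1, h2⟩
        · push_neg at htk
          rcases lt_or_eq_of_le htj with h | h
          · exact ⟨k, mem_insert_of_mem hkU, le_of_lt htk, by linarith⟩
          · exact ⟨j, mem_insert_self _ _, le_of_eq h.symm, by have := hp j; linarith⟩
    · refine ⟨S j, {j}, hS j, mem_singleton_self _, ?_, ?_, ?_, ?_⟩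
      · intro m hm; rw [mem_singleton] at hm; subst hm; exact ⟨le_refl _, le_refl _⟩
      · intro m hm; rw [mem_singleton] at hm; subst hm
        rw [filter_singleton, if_neg (lt_irrefl _)]
        simp
      · intro t h1 h2
        have ht : t = S j := le_antisymm h2 h1
        exact ⟨j, mem_singleton_self _, le_of_eq ht.symm, by have := hp j; linarith⟩
      · intro k
        by_cases hk : k = j
        · subst hk; left; exact le_refl _
        · rcases hdisj j k (fun h => hk h.symm) with h | h
          · right
            rcases lt_or_eq_of_le h with h' | h'
            · exact h'
            · exact absurd ⟨k, hk, h'⟩ hex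
          · left; have := hp j; linarith

lemma exists_block {n : ℕ} (p S : Fin n → ℝ) (hp : ∀ j, 0 < p j) (hS : ∀ j, 0 ≤ S j)
    (hdisj : ∀ j k : Fin n, j ≠ k → S k + p k ≤ S j ∨ S j + p j ≤ S k) (j : Fin n) :
    ∃ t0 : ℝ, ∃ U : Finset (Fin n),
      0 ≤ t0 ∧ j ∈ U ∧
      (∀ m ∈ U, t0 ≤ S m ∧ S m ≤ S j) ∧
      (∀ m ∈ U, S m = t0 + ∑ l ∈ U.filter (fun l => S l < S m), p l) ∧
      (∀ t : ℝ, t0 ≤ t → t ≤ S j → ∃ m ∈ U, S m ≤ t ∧ t < S m + p m) ∧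
      (∀ k, t0 ≤ S k ∨ S k + p k < t0) := by
  classical
  exact block_aux p S hp hS hdisj ((univ.filter fun k => S k < S j).card + 1) j (Nat.lt_succ_self _)

open Finset


/-- Theorem 3 of the paper: Suppose the (adjusted) release times `r'`
are consistent with the precedence order and there are a set `A` of (guessed early)
jobs and times `S' k ≥ 0` for `k ∈ A` such that: (b) `r' k ≥ S' k` for `k ∈ A`;
(c) `r' j ≥ p j` for `j ∉ A`; and (e) no release time lies in the open interval
`(S' k, S' k + p k)` for any `k ∈ A`. If `C` satisfies the parallel inequalities with
`C₁ ≤ … ≤ Cₙ` and `σ` is a feasible schedule with the list-scheduling property for the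
index order, then `C^σ_j ≤ 2 C_j` for every job, and hence
`Σ_j w_j C^σ_j ≤ 2 Σ_j w_j C_j`. -/
theorem bounded_instance_two_approx
    {n : ℕ} (p r' w C : Fin n → ℝ) (prec : Fin n → Fin n → Prop)
    (hp : ∀ j, 0 < p j) (hr' : ∀ j, 0 ≤ r' j) (hw : ∀ j, 0 ≤ w j)
    (hprec_lt : ∀ j k, prec j k → j < k)
    (htrans : ∀ i j k, prec i j → prec j k → prec i k)
    (hrcons : ∀ j k, prec j k → r' j ≤ r' k)
    (A : Finset (Fin n)) (S' : Fin n → ℝ)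
    (hS'nonneg : ∀ k ∈ A, 0 ≤ S' k)
    (hb : ∀ k ∈ A, S' k ≤ r' k)
    (hc : ∀ j, j ∉ A → p j ≤ r' j)
    (he : ∀ j : Fin n, ∀ k ∈ A, r' j ∉ Set.Ioo (S' k) (S' k + p k))
    (hCmono : ∀ j k : Fin n, j ≤ k → C j ≤ C k)
    (hLP : ∀ (U : Finset (Fin n)) (hU : U.Nonempty),
      U.inf' hU r' * ∑ j ∈ U, p j + (∑ j ∈ U, p j) ^ 2 / 2 ≤ ∑ j ∈ U, p j * C j)
    (S : Fin n → ℝ)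
    (hrel : ∀ j, r' j ≤ S j)
    (hdisj : ∀ j k, j ≠ k → S k + p k ≤ S j ∨ S j + p j ≤ S k)
    (hprecS : ∀ j k, prec j k → S j + p j ≤ S k)
    (hLS : ∀ t : ℝ, (∀ h, S h + p h ≤ t ∨ t ≤ S h) →
      ∀ j, (r' j ≤ t ∧ t ≤ S j ∧ ∀ k, prec k j → S k + p k ≤ t) →
        (∀ k, (r' k ≤ t ∧ t ≤ S k ∧ ∀ l, prec l k → S l + p l ≤ t) → j ≤ k) →
        S j = t) :
    (∀ j, S j + p j ≤ 2 * C j) ∧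
    ∑ j, w j * (S j + p j) ≤ 2 * ∑ j, w j * C j := by
  classical
  have hS0 : ∀ j, 0 ≤ S j := fun j => (hr' j).trans (hrel j)
  have hSinj : ∀ a b : Fin n, S a = S b → a = b := by
    intro a b hab
    by_contra hne
    rcases hdisj a b hne with h | h
    · linarith [hp a, hp b]
    · linarith [hp a, hp b]
  have key : ∀ j, S j + p j ≤ 2 * C j := by
    intro j
    obtain ⟨t0, U, ht0, hjU, hbd, hchain, hcov, hgap⟩ := exists_block p S hp hS0 hdisj j
    -- membership: any job starting within the block is in the block
    have hmem : ∀ k : Fin n, t0 ≤ S k → S k ≤ S j → k ∈ U := by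
      intro k h1 h2
      obtain ⟨m, hmU, hm1, hm2⟩ := hcov (S k) h1 h2
      by_cases hkm : k = m
      · subst hkm; exact hmU
      · rcases hdisj k m hkm with h | h
        · linarith
        · have := hp k; linarith
    -- total processing of the block
    have htot : S j + p j = t0 + ∑ m ∈ U, p m := by
      have h1 := hchain j hjU
      have herase : U.filter (fun l => S l < S j) = U.erase j := by
        ext l
        simp only [mem_filter, mem_erase]
        constructor
        · rintro ⟨hl, hlt⟩
          exact ⟨fun h => by subst h; exact lt_irrefl _ hlt, hl⟩
        · rintro ⟨hne, hl⟩
          exact ⟨hl, lt_of_le_of_ne ((hbd l hl).2) (fun h => hne (hSinj _ _ h))⟩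
      rw [herase] at h1
      have h2 : ∑ l ∈ U.erase j, p l + p j = ∑ l ∈ U, p l := Finset.sum_erase_add U p hjU
      linarith
    -- all jobs in the block are released no earlier than t0
    have hrU : ∀ m ∈ U, t0 ≤ r' m := by
      have main : ∀ N : ℕ, ∀ m : Fin n, (m : ℕ) < N → m ∈ U → t0 ≤ r' m := by
        intro N
        induction N with
        | zero => intro m h; omega
        | succ N IH =>
          intro m hmN hmU
          by_cases hpd : ∃ l, prec l m ∧ t0 < S l + p l
          · obtain ⟨l, hlm, hl⟩ := hpd
            have hSl : t0 ≤ S l := by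
              rcases hgap l with h | h
              · exact h
              · linarith
            have hlU : l ∈ U := by
              apply hmem l hSl
              have h1 := hprecS l m hlm
              have h2 := (hbd m hmU).2
              have := hp l
              linarith
            have hlN : (l : ℕ) < N := by
              have h1 : (l : ℕ) < (m : ℕ) := hprec_lt l m hlm
              omega
            exact (IH l hlN hlU).trans (hrcons l m hlm)
          · push_neg at hpd
            by_contra hrm
            push_neg at hrm
            set F : Finset (Fin n) := univ.filter (fun k => S k + p k < t0) with hF
            set T : Finset ℝ := insert (r' m) (F.image (fun k => S k + p k)) with hT
            have hTne : T.Nonempty := insert_nonempty _ _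
            set u := T.max' hTne with hu
            have hru : r' m ≤ u := T.le_max' _ (mem_insert_self _ _)
            have hut0 : u < t0 := by
              rw [hu]
              apply (Finset.max'_lt_iff T hTne).mpr
              intro b hb'
              rcases mem_insert.mp hb' with rfl | hb'
              · exact hrm
              · obtain ⟨k, hk, rfl⟩ := mem_image.mp hb'
                exact (mem_filter.mp hk).2
            have hFu : ∀ k : Fin n, S k + p k < t0 → S k + p k ≤ u := fun k hk =>
              T.le_max' _ (mem_insert_of_mem (mem_image_of_mem _ (mem_filter.mpr ⟨mem_univ _, hk⟩)))
            have havail : ∀ h, S h + p h ≤ u ∨ u ≤ S h := by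
              intro h
              rcases hgap h with h1 | h1
              · right; linarith
              · left; exact hFu h h1
            have hmav : r' m ≤ u ∧ u ≤ S m ∧ ∀ l, prec l m → S l + p l ≤ u := by
              refine ⟨hru, by have := (hbd m hmU).1; linarith, fun l hl => ?_⟩
              have h1 := hpd l hl
              rcases hgap l with h2 | h2
              · have := hp l; linarith
              · exact hFu l h2
            set Av : Finset (Fin n) :=
              univ.filter (fun k => r' k ≤ u ∧ u ≤ S k ∧ ∀ l, prec l k → S l + p l ≤ u) with hAv
            have hAvne : Av.Nonempty := ⟨m, mem_filter.mpr ⟨mem_univ _, hmav⟩⟩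
            set jm := Av.min' hAvne with hjm
            have hjmAv := Av.min'_mem hAvne
            have hjmprop := (mem_filter.mp hjmAv).2
            have hjmS : S jm = u :=
              hLS u havail jm hjmprop
                (fun k hk => Av.min'_le k (mem_filter.mpr ⟨mem_univ _, hk⟩))
            rcases hgap jm with h1 | h1
            · linarith
            · have := hFu jm h1
              have := hp jm
              linarith
      intro m hmU
      exact main ((m : ℕ) + 1) m (Nat.lt_succ_self _) hmU
    by_cases hks : ∃ k ∈ U, j < k
    · -- a larger-index job runs in the block; take the one with the latest start
      obtain ⟨k0, hk0U, hjk0⟩ := hks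
      set K := U.filter (fun k => j < k) with hK
      have hKne : K.Nonempty := ⟨k0, mem_filter.mpr ⟨hk0U, hjk0⟩⟩
      obtain ⟨ks, hksK, hksmax⟩ := K.exists_max_image S hKne
      have hksU : ks ∈ U := (mem_filter.mp hksK).1
      have hjks : j < ks := (mem_filter.mp hksK).2
      have hSks_lt : S ks < S j :=
        lt_of_le_of_ne ((hbd ks hksU).2) (fun h => (ne_of_gt hjks) (hSinj _ _ h))
      set U' := U.filter (fun m => S ks < S m) with hU'
      have hjU' : j ∈ U' := mem_filter.mpr ⟨hjU, hSks_lt⟩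
      have hU'le : ∀ m ∈ U', m ≤ j := by
        intro m hm
        by_contra h
        push_neg at h
        have hmK : m ∈ K := mem_filter.mpr ⟨(mem_filter.mp hm).1, h⟩
        have h1 := hksmax m hmK
        have h2 := (mem_filter.mp hm).2
        linarith
      have hav2 : ∀ h, S h + p h ≤ S ks ∨ S ks ≤ S h := by
        intro h
        by_cases hh : h = ks
        · subst hh; right; exact le_refl _
        · rcases hdisj h ks hh with h1 | h1
          · right; have := hp ks; linarith
          · left; exact h1
      -- all jobs in U' are released strictly after S ks
      have hrU' : ∀ m ∈ U', S ks < r' m := by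
        have main : ∀ N : ℕ, ∀ m : Fin n, (m : ℕ) < N → m ∈ U' → S ks < r' m := by
          intro N
          induction N with
          | zero => intro m h; omega
          | succ N IH =>
            intro m hmN hmU'
            have hmU : m ∈ U := (mem_filter.mp hmU').1
            have hSm : S ks < S m := (mem_filter.mp hmU').2
            have hmj : (m : ℕ) ≤ (j : ℕ) := hU'le m hmU'
            by_cases hpd : ∃ l, prec l m ∧ S ks < S l + p l
            · obtain ⟨l, hlm, hl⟩ := hpd
              have hlval : (l : ℕ) < (m : ℕ) := hprec_lt l m hlm
              have hjksval : (j : ℕ) < (ks : ℕ) := hjks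
              have hlks : l ≠ ks := fun h => by
                have : (l : ℕ) = (ks : ℕ) := congrArg Fin.val h
                omega
              have hSl : S ks ≤ S l := by
                rcases hav2 l with h1 | h1
                · linarith
                · exact h1
              have hSl' : S ks < S l :=
                lt_of_le_of_ne hSl (fun h => hlks (hSinj _ _ h.symm))
              have hlU : l ∈ U := by
                apply hmem l
                · have := (hbd ks hksU).1; linarith
                · have h1 := hprecS l m hlm
                  have h2 := (hbd m hmU).2
                  have := hp l
                  linarith
              have hlU' : l ∈ U' := mem_filter.mpr ⟨hlU, hSl'⟩
              have hlN : (l : ℕ) < N := by omega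
              exact lt_of_lt_of_le (IH l hlN hlU') (hrcons l m hlm)
            · push_neg at hpd
              by_contra hrm
              push_neg at hrm
              have hmav : r' m ≤ S ks ∧ S ks ≤ S m ∧ ∀ l, prec l m → S l + p l ≤ S ks :=
                ⟨hrm, le_of_lt hSm, hpd⟩
              set Av : Finset (Fin n) :=
                univ.filter (fun k => r' k ≤ S ks ∧ S ks ≤ S k ∧
                  ∀ l, prec l k → S l + p l ≤ S ks) with hAv
              have hAvne : Av.Nonempty := ⟨m, mem_filter.mpr ⟨mem_univ _, hmav⟩⟩
              set jm := Av.min' hAvne with hjm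
              have hjmAv := Av.min'_mem hAvne
              have hjmprop := (mem_filter.mp hjmAv).2
              have hjmS : S jm = S ks :=
                hLS (S ks) hav2 jm hjmprop
                  (fun k hk => Av.min'_le k (mem_filter.mpr ⟨mem_univ _, hk⟩))
              have hjmks : jm = ks := hSinj _ _ hjmS
              have hjmm : (jm : ℕ) ≤ (m : ℕ) := Av.min'_le m (mem_filter.mpr ⟨mem_univ _, hmav⟩)
              have hjksval : (j : ℕ) < (ks : ℕ) := hjks
              have : (jm : ℕ) = (ks : ℕ) := congrArg Fin.val hjmks
              omega
        intro m hmU'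
        exact main ((m : ℕ) + 1) m (Nat.lt_succ_self _) hmU'
      -- decomposition of the block total
      have hdecomp : S j + p j = S ks + p ks + ∑ m ∈ U', p m := by
        have h1 := hchain ks hksU
        have hsplit : ∑ m ∈ U, p m =
            ∑ m ∈ U.filter (fun l => S l < S ks), p m +
            ∑ m ∈ U.filter (fun l => ¬ S l < S ks), p m :=
          (Finset.sum_filter_add_sum_filter_not U _ p).symm
        have hfeq : U.filter (fun l => ¬ S l < S ks) = insert ks U' := by
          ext l
          simp only [mem_filter, mem_insert, not_lt, hU']
          constructor
          · rintro ⟨hl, hge⟩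
            rcases eq_or_lt_of_le hge with h | h
            · left; exact hSinj _ _ h.symm
            · right; exact ⟨hl, h⟩
          · rintro (rfl | ⟨hl, h⟩)
            · exact ⟨hksU, le_refl _⟩
            · exact ⟨hl, le_of_lt h⟩
        have hksU' : ks ∉ U' := by
          simp only [hU', mem_filter]
          rintro ⟨-, h⟩
          exact lt_irrefl _ h
        rw [hfeq, Finset.sum_insert hksU'] at hsplit
        linarith
      -- LP bound on U'
      have hU'ne : U'.Nonempty := ⟨j, hjU'⟩
      have hP' : 0 < ∑ m ∈ U', p m := Finset.sum_pos (fun m _ => hp m) hU'ne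
      have hlp := hLP U' hU'ne
      have hsum : ∑ m ∈ U', p m * C m ≤ (∑ m ∈ U', p m) * C j := by
        rw [Finset.sum_mul]
        exact Finset.sum_le_sum (fun m hm =>
          mul_le_mul_of_nonneg_left (hCmono m j (hU'le m hm)) (hp m).le)
      have hinf1 : S ks ≤ U'.inf' hU'ne r' :=
        Finset.le_inf' hU'ne r' (fun m hm => (hrU' m hm).le)
      have hCj : U'.inf' hU'ne r' + (∑ m ∈ U', p m) / 2 ≤ C j := by
        nlinarith [hlp, hsum, hP']
      by_cases hA : ks ∈ A
      · have hinf2 : S' ks + p ks ≤ U'.inf' hU'ne r' := by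
          apply Finset.le_inf' hU'ne r'
          intro m hm
          have h1 : S ks < r' m := hrU' m hm
          have h2 : S' ks ≤ S ks := (hb ks hA).trans (hrel ks)
          have h3 := he m ks hA
          simp only [Set.mem_Ioo, not_and, not_lt] at h3
          exact h3 (by linarith)
        have hS'0 := hS'nonneg ks hA
        have hSks0 := hS0 ks
        linarith [hdecomp, hinf1, hinf2, hCj, hP']
      · have hpks : p ks ≤ S ks := (hc ks hA).trans (hrel ks)
        linarith [hdecomp, hinf1, hCj, hP']
    · -- all jobs in the block have index at most j
      push_neg at hks
      have hUne : U.Nonempty := ⟨j, hjU⟩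
      have hP : 0 < ∑ m ∈ U, p m := Finset.sum_pos (fun m _ => hp m) hUne
      have hlp := hLP U hUne
      have hsum : ∑ m ∈ U, p m * C m ≤ (∑ m ∈ U, p m) * C j := by
        rw [Finset.sum_mul]
        exact Finset.sum_le_sum (fun m hm =>
          mul_le_mul_of_nonneg_left (hCmono m j (hks m hm)) (hp m).le)
      have hinf : t0 ≤ U.inf' hUne r' := Finset.le_inf' hUne r' (fun m hm => hrU m hm)
      have hCj : t0 + (∑ m ∈ U, p m) / 2 ≤ C j := by
        nlinarith [hlp, hsum, hP, hinf]
      linarith [htot, hCj, ht0, hP]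
  refine ⟨key, ?_⟩
  calc ∑ j, w j * (S j + p j) ≤ ∑ j, w j * (2 * C j) :=
        Finset.sum_le_sum (fun j _ => mul_le_mul_of_nonneg_left (key j) (hw j))
    _ = 2 * ∑ j, w j * C j := by
        rw [Finset.mul_sum]
        exact Finset.sum_congr rfl (fun j _ => by ring)
end
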